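/- Let G be a finite group and g,h ∈ G, and suppose p, s ∈ ℤG have nonnegative coefficients and satisfy p + s = p·h + g·s. If w₀ ∈ G is a summand of p + s (i.e., has positive coefficient in p+s), then either w₀·h or g·w₀ is again a summand of p + s. -/

import Mathlib

/-- If p, s ∈ ℤG have nonnegative coefficients and p + s = p·h + g·s,
then for any summand w₀ of p + s (positive coefficient), either w₀·h or g·w₀ is again
a summand of p + s. -/
theorem summand_propagates
    {G : Type*} [Group G] [Fintype G] (g h : G)
    (p s : MonoidAlgebra ℤ G)
    (hp : ∀ w : G, 0 ≤ p.coeff w) (hs : ∀ w : G, 0 ≤ s.coeff w)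
    (heq : p + s = p * MonoidAlgebra.of ℤ G h + MonoidAlgebra.of ℤ G g * s)
    (w₀ : G) (hw₀ : 0 < (p + s).coeff w₀) :
    0 < (p + s).coeff (w₀ * h) ∨ 0 < (p + s).coeff (g * w₀) := by
  have key : ∀ x : G, (p + s).coeff x = p.coeff (x * h⁻¹) + s.coeff (g⁻¹ * x) := by
    intro x
    rw [heq, MonoidAlgebra.coeff_add]
    simp [MonoidAlgebra.of_apply, MonoidAlgebra.coeff_add, MonoidAlgebra.coeff_mul_single_apply,
      MonoidAlgebra.coeff_single_mul_apply]
  rw [MonoidAlgebra.coeff_add, Finsupp.add_apply] at hw₀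
  rcases lt_or_ge 0 (p.coeff w₀) with hpw | hpw
  · left
    rw [key]
    have : p.coeff ((w₀ * h) * h⁻¹) = p.coeff w₀ := by group
    rw [this]
    exact add_pos_of_pos_of_nonneg hpw (hs _)
  · right
    have hsw : 0 < s.coeff w₀ := by
      rcases (hs w₀).lt_or_eq with h' | h'
      · exact h'
      · omega
    rw [key]
    have : s.coeff (g⁻¹ * (g * w₀)) = s.coeff w₀ := by group
    rw [this]
    exact add_pos_of_nonneg_of_pos (hp _) hsw
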